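/- arXiv:2501.07073 — 2 statements merged into one kernel-verified Lean document; each statement's English description precedes it below -/
import Mathlib

section
/- The function Q(x) = 4(6+|x|²)/(2+|x|²)² on ℝ³ satisfies the elliptic profile equation -ΔQ + (1/2)(x·∇Q + 2Q) - Q² - ∇Q·∇Δ⁻¹Q = 0, where Δ⁻¹Q denotes the Newtonian potential solving Δc = Q (explicitly one may verify with c such that ∂_r c = D₂⁻¹Q where D₂⁻¹Q(r) = r⁻²∫₀^r Q(s)s² ds). -/
open MeasureTheory

/-- The Laplacian of `f : ℝ³ → ℝ`, written as the sum of second derivatives of the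
coordinate slices of `f`. -/
noncomputable def laplacian3 (f : EuclideanSpace ℝ (Fin 3) → ℝ)
    (x : EuclideanSpace ℝ (Fin 3)) : ℝ :=
  ∑ i : Fin 3, deriv (deriv fun t : ℝ => f (x + t • EuclideanSpace.single i 1)) 0

noncomputable def gQ (u : ℝ) : ℝ := 4 * (6 + u) / (2 + u) ^ 2
noncomputable def gQ1 (u : ℝ) : ℝ := -4 * (10 + u) / (2 + u) ^ 3
noncomputable def gQ2 (u : ℝ) : ℝ := 8 * (14 + u) / (2 + u) ^ 4

lemma hasDerivAt_gQ {u : ℝ} (h : (0:ℝ) < 2 + u) : HasDerivAt gQ (gQ1 u) u := by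
  have hnum : HasDerivAt (fun v : ℝ => 4 * (6 + v)) 4 u := by
    simpa using ((hasDerivAt_id' (x := u)).const_add 6).const_mul 4
  have hden : HasDerivAt (fun v : ℝ => (2 + v) ^ 2) (2 * (2 + u)) u := by
    have := ((hasDerivAt_id' (x := u)).const_add 2).pow 2
    refine this.congr_deriv ?_
    push_cast
    ring
  have hd := hnum.div hden (by positivity)
  refine hd.congr_deriv ?_
  have hne : (2 : ℝ) + u ≠ 0 := h.ne'
  simp only [gQ1]
  field_simp
  ring

lemma hasDerivAt_gQ1 {u : ℝ} (h : (0:ℝ) < 2 + u) : HasDerivAt gQ1 (gQ2 u) u := by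
  have hnum : HasDerivAt (fun v : ℝ => -4 * (10 + v)) (-4) u := by
    simpa using ((hasDerivAt_id' (x := u)).const_add 10).const_mul (-4)
  have hden : HasDerivAt (fun v : ℝ => (2 + v) ^ 3) (3 * (2 + u) ^ 2) u := by
    have := ((hasDerivAt_id' (x := u)).const_add 2).pow 3
    refine this.congr_deriv ?_
    push_cast
    ring
  have hd := hnum.div hden (by positivity)
  refine hd.congr_deriv ?_
  have hne : (2 : ℝ) + u ≠ 0 := h.ne'
  simp only [gQ2]
  field_simp
  ring

lemma normsq_line (x : EuclideanSpace ℝ (Fin 3)) (i : Fin 3) (t : ℝ) :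
    ‖x + t • EuclideanSpace.single i (1:ℝ)‖ ^ 2 = ‖x‖ ^ 2 + 2 * x i * t + t ^ 2 := by
  rw [norm_add_sq_real]
  have h1 : (inner ℝ x (t • EuclideanSpace.single i (1:ℝ)) : ℝ) = t * x i := by
    rw [real_inner_smul_right, EuclideanSpace.inner_single_right]
    simp
  have h2 : ‖t • EuclideanSpace.single i (1:ℝ)‖ ^ 2 = t ^ 2 := by
    rw [norm_smul]
    simp [mul_pow, sq_abs]
  rw [h1, h2]
  ring

lemma slice_deriv (x : EuclideanSpace ℝ (Fin 3)) (i : Fin 3) :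
    deriv (deriv fun t : ℝ => gQ (‖x + t • EuclideanSpace.single i (1:ℝ)‖ ^ 2)) 0
      = gQ2 (‖x‖ ^ 2) * (2 * x i) ^ 2 + gQ1 (‖x‖ ^ 2) * 2 := by
  set u := ‖x‖ ^ 2 with hu
  set a := x i with ha
  have hfun : (fun t : ℝ => gQ (‖x + t • EuclideanSpace.single i (1:ℝ)‖ ^ 2))
      = fun t => gQ (u + 2 * a * t + t ^ 2) := funext fun t => by rw [normsq_line]
  have hpos : ∀ t : ℝ, (0:ℝ) < 2 + (u + 2 * a * t + t ^ 2) := by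
    intro t
    have h0 : 0 ≤ u + 2 * a * t + t ^ 2 := (normsq_line x i t) ▸ sq_nonneg _
    linarith
  have hp : ∀ t : ℝ, HasDerivAt (fun s : ℝ => u + 2 * a * s + s ^ 2) (2 * a + 2 * t) t := by
    intro t
    have := (((hasDerivAt_id' (x := t)).const_mul (2 * a)).const_add u).add
      (hasDerivAt_pow 2 t)
    refine this.congr_deriv ?_
    push_cast
    ring
  have hd1 : deriv (fun t : ℝ => gQ (u + 2 * a * t + t ^ 2))
      = fun t => gQ1 (u + 2 * a * t + t ^ 2) * (2 * a + 2 * t) := by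
    funext t
    exact ((hasDerivAt_gQ (hpos t)).comp t (hp t)).deriv
  have hgen : HasDerivAt (fun s : ℝ => gQ1 (u + 2 * a * s + s ^ 2) * (2 * a + 2 * s))
      ((gQ2 (u + 2 * a * 0 + 0 ^ 2) * (2 * a + 2 * 0)) * (2 * a + 2 * 0)
        + gQ1 (u + 2 * a * 0 + 0 ^ 2) * 2) 0 := by
    have hA := (hasDerivAt_gQ1 (hpos 0)).comp 0 (hp 0)
    have hB : HasDerivAt (fun s : ℝ => 2 * a + 2 * s) 2 0 := by
      simpa using ((hasDerivAt_id' (x := (0:ℝ))).const_mul 2).const_add (2 * a)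
    exact hA.mul hB
  rw [hfun, hd1, hgen.deriv, show u + 2 * a * 0 + 0 ^ 2 = u from by ring]
  ring

lemma hasGradientAt_gQ (x : EuclideanSpace ℝ (Fin 3)) :
    HasGradientAt (fun y : EuclideanSpace ℝ (Fin 3) => gQ (‖y‖ ^ 2))
      ((2 * gQ1 (‖x‖ ^ 2)) • x) x := by
  have h0 : (0:ℝ) < 2 + ‖x‖ ^ 2 := by positivity
  have hns : HasFDerivAt (fun y : EuclideanSpace ℝ (Fin 3) => ‖y‖ ^ 2)
      (2 • (innerSL ℝ x)) x := (hasStrictFDerivAt_norm_sq x).hasFDerivAt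
  have hF : HasFDerivAt (fun y : EuclideanSpace ℝ (Fin 3) => gQ (‖y‖ ^ 2))
      (gQ1 (‖x‖ ^ 2) • (2 • (innerSL ℝ x))) x :=
    by have := (hasDerivAt_gQ h0).comp_hasFDerivAt x hns; exact this
  have he : (InnerProductSpace.toDual ℝ (EuclideanSpace ℝ (Fin 3)))
      ((2 * gQ1 (‖x‖ ^ 2)) • x) = gQ1 (‖x‖ ^ 2) • (2 • (innerSL ℝ x)) := by
    ext y
    simp [InnerProductSpace.toDual_apply_apply, real_inner_smul_left]
    ring
  exact hasGradientAt_iff_hasFDerivAt.mpr (he ▸ hF)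

lemma integ_eval {r : ℝ} (hr : 0 < r) :
    ∫ s in Set.Ioo (0 : ℝ) r, (4 * (6 + s ^ 2) / (2 + s ^ 2) ^ 2) * s ^ 2
      = 4 * r ^ 3 / (2 + r ^ 2) := by
  rw [← MeasureTheory.integral_Ioc_eq_integral_Ioo, ← intervalIntegral.integral_of_le hr.le]
  have hcont : Continuous fun s : ℝ => (4 * (6 + s ^ 2) / (2 + s ^ 2) ^ 2) * s ^ 2 := by
    apply Continuous.mul _ (continuous_pow 2)
    exact Continuous.div (by continuity) (by continuity) (fun s => by positivity)
  have hder : ∀ s ∈ Set.uIcc (0:ℝ) r,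
      HasDerivAt (fun s : ℝ => 4 * s ^ 3 / (2 + s ^ 2))
        ((4 * (6 + s ^ 2) / (2 + s ^ 2) ^ 2) * s ^ 2) s := by
    intro s _
    have h1 : HasDerivAt (fun s : ℝ => 4 * s ^ 3) (12 * s ^ 2) s := by
      have := (hasDerivAt_pow 3 s).const_mul (4:ℝ)
      refine this.congr_deriv ?_
      push_cast
      ring
    have h2 : HasDerivAt (fun s : ℝ => 2 + s ^ 2) (2 * s) s := by
      have := (hasDerivAt_pow 2 s).const_add (2:ℝ)
      refine this.congr_deriv ?_
      push_cast
      ring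
    have h3 := h1.div h2 (by positivity)
    refine h3.congr_deriv ?_
    have hne : (2:ℝ) + s ^ 2 ≠ 0 := by positivity
    field_simp
    ring
  rw [intervalIntegral.integral_eq_sub_of_hasDerivAt hder (hcont.intervalIntegrable _ _)]
  norm_num

/-- The explicit profile `Q(x) = 4(6+|x|²)/(2+|x|²)²` on `ℝ³` satisfies the elliptic
equation `-ΔQ + (1/2)(x·∇Q + 2Q) - Q² - ∇Q·∇Δ⁻¹Q = 0`, where `Δ⁻¹Q` is the
Newtonian potential `c` solving `Δc = Q`, whose (radial) gradient is
`∇c(x) = (D₂⁻¹Q(|x|)/|x|)·x` with `D₂⁻¹Q(r) = r⁻² ∫₀^r Q(s)s² ds`. -/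
theorem stmt_0 (Q c : EuclideanSpace ℝ (Fin 3) → ℝ)
    (hQ : ∀ x, Q x = 4 * (6 + ‖x‖ ^ 2) / (2 + ‖x‖ ^ 2) ^ 2)
    (hc : ∀ x, laplacian3 c x = Q x)
    (hgrad : ∀ x ≠ 0,
      gradient c x
        = (((‖x‖ ^ 2)⁻¹ *
              ∫ s in Set.Ioo (0 : ℝ) ‖x‖, (4 * (6 + s ^ 2) / (2 + s ^ 2) ^ 2) * s ^ 2) / ‖x‖)
            • x) :
    ∀ x ≠ 0,
      -laplacian3 Q x + (1 / 2) * ((inner ℝ x (gradient Q x) : ℝ) + 2 * Q x)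
          - Q x ^ 2 - (inner ℝ (gradient Q x) (gradient c x) : ℝ) = 0 := by
  intro x hx
  have hr : 0 < ‖x‖ := norm_pos_iff.mpr hx
  have hQf : Q = fun y : EuclideanSpace ℝ (Fin 3) => gQ (‖y‖ ^ 2) :=
    funext fun y => (hQ y).trans rfl
  -- Laplacian of Q
  have hns : ‖x‖ ^ 2 = ∑ i : Fin 3, (x i) ^ 2 := by
    rw [EuclideanSpace.norm_eq, Real.sq_sqrt (by positivity)]
    exact Finset.sum_congr rfl fun i _ => by rw [Real.norm_eq_abs, sq_abs]
  have hlap : laplacian3 Q x = 4 * gQ2 (‖x‖ ^ 2) * ‖x‖ ^ 2 + 6 * gQ1 (‖x‖ ^ 2) := by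
    rw [hQf]
    have hsum : laplacian3 (fun y : EuclideanSpace ℝ (Fin 3) => gQ (‖y‖ ^ 2)) x
        = ∑ i : Fin 3, (gQ2 (‖x‖ ^ 2) * (2 * x i) ^ 2 + gQ1 (‖x‖ ^ 2) * 2) :=
      Finset.sum_congr rfl fun i _ => slice_deriv x i
    rw [hsum]
    have h1 : ∑ i : Fin 3, (gQ2 (‖x‖ ^ 2) * (2 * x i) ^ 2 + gQ1 (‖x‖ ^ 2) * 2)
        = ∑ i : Fin 3, (4 * gQ2 (‖x‖ ^ 2) * (x i) ^ 2) + ∑ i : Fin 3, (gQ1 (‖x‖ ^ 2) * 2) := by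
      rw [← Finset.sum_add_distrib]
      exact Finset.sum_congr rfl fun i _ => by ring
    rw [h1, ← Finset.mul_sum, ← hns]
    simp [Finset.sum_const]
    ring
  -- gradient of Q
  have hgQ : gradient Q x = (2 * gQ1 (‖x‖ ^ 2)) • x := by
    rw [hQf]
    exact (hasGradientAt_gQ x).gradient
  -- gradient of c
  have hgc : gradient c x = (((‖x‖ ^ 2)⁻¹ * (4 * ‖x‖ ^ 3 / (2 + ‖x‖ ^ 2))) / ‖x‖) • x := by
    rw [hgrad x hx, integ_eval hr]
  rw [hlap, hgQ, hgc, hQ x, real_inner_smul_right, real_inner_smul_left,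
    real_inner_smul_right, real_inner_self_eq_norm_sq]
  simp only [gQ1, gQ2]
  have hne : (2:ℝ) + ‖x‖ ^ 2 ≠ 0 := by positivity
  have hxne : ‖x‖ ≠ 0 := hr.ne'
  field_simp
  ring
end

section
/- For l ≥ 0 define D_k f = ∂_r f + (k/r)f and V₁(r) = 8r/(r²+2)², the potential arising from V₁ = -∂_r(r⁻¹ D₂⁻¹Q) with Q(r)=4(6+r²)/(2+r²)². Then for any real β with l - β > -1/2, the symmetrized weight W(r) := (1/2)∂_r V₁ + ((l+2-β)/r) V₁ equals (8(l-β)+4)/(r²+2)² + 32/(r²+2)³ and is strictly positive on (0,∞). -/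
/-- For `V₁(r) = 8r/(r²+2)²` and `l - β > -1/2`, the symmetrized weight
`W = (1/2)∂_r V₁ + ((l+2-β)/r) V₁` equals `(8(l-β)+4)/(r²+2)² + 32/(r²+2)³` and is positive. -/
theorem stmt_10 (l : ℕ) (β : ℝ) (hβ : (l : ℝ) - β > -(1 / 2))
    (V₁ : ℝ → ℝ) (hV₁ : ∀ r, V₁ r = 8 * r / (r ^ 2 + 2) ^ 2)
    (W : ℝ → ℝ)
    (hW : ∀ r, W r = (1 / 2) * deriv V₁ r + (((l : ℝ) + 2 - β) / r) * V₁ r) :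
    ∀ r ∈ Set.Ioi (0 : ℝ),
      W r = (8 * ((l : ℝ) - β) + 4) / (r ^ 2 + 2) ^ 2 + 32 / (r ^ 2 + 2) ^ 3 ∧ 0 < W r := by
  have hVfun : V₁ = fun r => 8 * r / (r ^ 2 + 2) ^ 2 := funext hV₁
  intro r hr
  have hr0 : (0:ℝ) < r := hr
  have hden : (0:ℝ) < r ^ 2 + 2 := by positivity
  have hden' : (r ^ 2 + 2) ≠ 0 := ne_of_gt hden
  have hD : HasDerivAt V₁ ((16 - 24 * r ^ 2) / (r ^ 2 + 2) ^ 3) r := by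
    rw [hVfun]
    have h1 : HasDerivAt (fun r : ℝ => 8 * r) 8 r := by
      simpa using (hasDerivAt_id r).const_mul (8:ℝ)
    have h2 : HasDerivAt (fun r : ℝ => (r ^ 2 + 2) ^ 2) (2 * (r ^ 2 + 2) * (2 * r)) r := by
      have := ((hasDerivAt_pow 2 r).add_const (2:ℝ)).fun_pow 2
      simpa [mul_comm, mul_assoc, mul_left_comm] using this
    have := h1.fun_div h2 (by positivity)
    refine this.congr_deriv ?_
    rw [div_eq_div_iff (by positivity) (by positivity)]
    ring
  have hderiv : deriv V₁ r = (16 - 24 * r ^ 2) / (r ^ 2 + 2) ^ 3 := hD.deriv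
  have hWr : W r = (8 * ((l : ℝ) - β) + 4) / (r ^ 2 + 2) ^ 2 + 32 / (r ^ 2 + 2) ^ 3 := by
    rw [hW, hderiv, hV₁]
    field_simp
    ring
  refine ⟨hWr, ?_⟩
  rw [hWr]
  have h1 : 0 < 8 * ((l : ℝ) - β) + 4 := by linarith
  positivity
end
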